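/- (Mixed-radix decomposition.) Let N ≥ 1 and let p_0, p_1, …, p_{N−1} be positive natural numbers with product P = p_0 · p_1 ⋯ p_{N−1}. Then for every natural number k and every real number x, d_P(k, x) = Σ_{h=0}^{N−1} d_{p_h}(k, x / ((Π_{m=0}^{h−1} p_m)^{k+1} · (Π_{n=h+1}^{N−1} p_n)^k)) · Π_{j=0}^{h−1} p_j, where empty products equal 1. -/

import Mathlib

/-- The real-argument digit function: the `k`-th digit of the real number `x`
written in radix `b`. -/
noncomputable def digitR (b : ℕ) (k : ℕ) (x : ℝ) : ℤ := ⌊x / (b : ℝ) ^ k⌋ - b * ⌊x / (b : ℝ) ^ (k + 1)⌋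

/-- Mixed-radix decomposition of the digit function. -/
theorem digitR_mixed_radix (N : ℕ) (hN : 1 ≤ N) (p : ℕ → ℕ) (hp : ∀ h, h < N → 0 < p h)
    (k : ℕ) (x : ℝ) :
    digitR (∏ m ∈ Finset.range N, p m) k x =
      ∑ h ∈ Finset.range N,
        digitR (p h) k
            (x / (((∏ m ∈ Finset.range h, p m : ℕ) : ℝ) ^ (k + 1) *
              ((∏ n ∈ Finset.Ico (h + 1) N, p n : ℕ) : ℝ) ^ k)) *
          (∏ j ∈ Finset.range h, p j : ℕ) := by
  set P : ℕ := ∏ m ∈ Finset.range N, p m with hP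
  set f : ℕ → ℤ := fun h =>
    ⌊x / (((∏ m ∈ Finset.range h, p m : ℕ) : ℝ) * (P : ℝ) ^ k)⌋ *
      (∏ m ∈ Finset.range h, p m : ℕ) with hf
  have key : ∀ h ∈ Finset.range N,
      digitR (p h) k
            (x / (((∏ m ∈ Finset.range h, p m : ℕ) : ℝ) ^ (k + 1) *
              ((∏ n ∈ Finset.Ico (h + 1) N, p n : ℕ) : ℝ) ^ k)) *
          (∏ j ∈ Finset.range h, p j : ℕ) = f h - f (h + 1) := by
    intro h hh
    simp only [Finset.mem_range] at hh
    have hsplitN : P = (∏ m ∈ Finset.range h, p m) * p h *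
        (∏ n ∈ Finset.Ico (h + 1) N, p n) := by
      rw [hP, ← Finset.prod_range_mul_prod_Ico p (le_of_lt hh),
        Finset.prod_eq_prod_Ico_succ_bot hh, mul_assoc]
    have hsplit : (P : ℝ) =
        ((∏ m ∈ Finset.range h, p m : ℕ) : ℝ) * (p h : ℝ) *
          ((∏ n ∈ Finset.Ico (h + 1) N, p n : ℕ) : ℝ) := by
      rw [hsplitN]; push_cast; ring
    have h1 : x / (((∏ m ∈ Finset.range h, p m : ℕ) : ℝ) ^ (k + 1) *
        ((∏ n ∈ Finset.Ico (h + 1) N, p n : ℕ) : ℝ) ^ k) / (p h : ℝ) ^ k =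
        x / (((∏ m ∈ Finset.range h, p m : ℕ) : ℝ) * (P : ℝ) ^ k) := by
      rw [div_div]; congr 1; rw [hsplit]; ring
    have h2 : x / (((∏ m ∈ Finset.range h, p m : ℕ) : ℝ) ^ (k + 1) *
        ((∏ n ∈ Finset.Ico (h + 1) N, p n : ℕ) : ℝ) ^ k) / (p h : ℝ) ^ (k + 1) =
        x / (((∏ m ∈ Finset.range (h + 1), p m : ℕ) : ℝ) * (P : ℝ) ^ k) := by
      rw [div_div]; congr 1
      rw [Finset.prod_range_succ, Nat.cast_mul, hsplit]; ring
    simp only [digitR, hf, h1, h2, Finset.prod_range_succ]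
    push_cast
    ring
  rw [Finset.sum_congr rfl key, Finset.sum_range_sub' f, hf]
  simp only [Finset.range_zero, Finset.prod_empty, Nat.cast_one, one_mul, mul_one, digitR, ← hP]
  rw [← pow_succ']
  ring
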